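/- Let f : ℝ^(m×n) → ℝ be convex and differentiable, k ≥ 2, and L_k(M₁, …, M_k) = f(M_k ⋯ M₁) with M_i ∈ ℝ^(d_i×d_{i-1}), d_k = m, d₀ = n. Suppose d_j = min_{0≤i≤k} d_i for some 0 < j < k. If (M₁, …, M_k) is a local minimum of L_k, set A = M_k ⋯ M_{j+1} and B = M_j ⋯ M₁. Then the gradient of L₂(X,Y) = f(XY) vanishes at (A,B): f'(AB) Bᵀ = 0 and Aᵀ f'(AB) = 0. -/

import Mathlib

attribute [local instance] Matrix.frobeniusNormedAddCommGroup Matrix.frobeniusNormedSpace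

/-- Product `M (b-1) * ⋯ * M a` of a chain of matrices (identity when `b = a`,
junk value `0` when `b < a`). -/
def chainProd (d : ℕ → ℕ) (M : ∀ i : ℕ, Matrix (Fin (d (i + 1))) (Fin (d i)) ℝ)
    (a : ℕ) : (b : ℕ) → Matrix (Fin (d b)) (Fin (d a)) ℝ
  | 0 => if h : 0 = a then by rw [← h]; exact 1 else 0
  | (b + 1) => if h : b + 1 = a then by rw [← h]; exact 1
      else M b * chainProd d M a b

/-- Extend a `Fin k`-indexed tuple of layer matrices to an `ℕ`-indexed one (by `0`). -/
def ext (d : ℕ → ℕ) (k : ℕ)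
    (N : ∀ i : Fin k, Matrix (Fin (d (i.1 + 1))) (Fin (d i.1)) ℝ) :
    ∀ i : ℕ, Matrix (Fin (d (i + 1))) (Fin (d i)) ℝ :=
  fun i => if h : i < k then N ⟨i, h⟩ else 0
open Matrix

section lemmas
variable {d : ℕ → ℕ} {M M' : ∀ i : ℕ, Matrix (Fin (d (i + 1))) (Fin (d i)) ℝ}

lemma chainProd_self (a : ℕ) : chainProd d M a a = 1 := by
  cases a <;> simp [chainProd]

lemma chainProd_succ_of_le {a b : ℕ} (h : a ≤ b) :
    chainProd d M a (b + 1) = M b * chainProd d M a b := by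
  have hne : b + 1 ≠ a := by omega
  simp [chainProd, hne]

lemma chainProd_of_lt {a b : ℕ} (h : b < a) : chainProd d M a b = (0 : _) := by
  induction b with
  | zero => simp [chainProd]; omega
  | succ b ih =>
    have hne : b + 1 ≠ a := by omega
    simp [chainProd, hne, ih (by omega)]

lemma chainProd_split {a b c : ℕ} (hab : a ≤ b) (hbc : b ≤ c) :
    chainProd d M a c = chainProd d M b c * chainProd d M a b := by
  induction c, hbc using Nat.le_induction with
  | base => rw [chainProd_self, Matrix.one_mul]
  | succ c hbc ih =>
    rw [chainProd_succ_of_le (hab.trans hbc), chainProd_succ_of_le hbc, ih,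
      Matrix.mul_assoc]

lemma chainProd_congr {a b : ℕ} (h : ∀ i, a ≤ i → i < b → M i = M' i) :
    chainProd d M a b = chainProd d M' a b := by
  induction b with
  | zero => rfl
  | succ b ih =>
    by_cases hba : b + 1 = a
    · simp [chainProd, hba]
    · by_cases hab : a ≤ b
      · simp only [chainProd, dif_neg hba]
        rw [h b hab (by omega), ih (fun i h1 h2 => h i h1 (by omega))]
      · rw [chainProd_of_lt (by omega), chainProd_of_lt (by omega)]

lemma chainProd_decomp {a i b : ℕ} (hai : a ≤ i) (hib : i < b) :
    chainProd d M a b = chainProd d M (i + 1) b * (M i * chainProd d M a i) := by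
  rw [chainProd_split (Nat.le_succ_of_le hai) hib, chainProd_succ_of_le hai]

end lemmas

section ext

variable {d : ℕ → ℕ} {k : ℕ} {N : ∀ i : Fin k, Matrix (Fin (d (i.1 + 1))) (Fin (d i.1)) ℝ}

lemma ext_apply {i : ℕ} (hik : i < k) : _root_.ext d k N i = N ⟨i, hik⟩ :=
  dif_pos hik

lemma ext_update_ne {i : ℕ} (hik : i < k) (X) {l : ℕ} (h : l ≠ i) :
    _root_.ext d k (Function.update N ⟨i, hik⟩ X) l = _root_.ext d k N l := by
  unfold _root_.ext
  by_cases hl : l < k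
  · rw [dif_pos hl, dif_pos hl, Function.update_of_ne (by simp [Fin.ext_iff, h])]
  · rw [dif_neg hl, dif_neg hl]

lemma ext_update_self {i : ℕ} (hik : i < k) (X) :
    _root_.ext d k (Function.update N ⟨i, hik⟩ X) i = X := by
  unfold _root_.ext
  rw [dif_pos hik]
  exact Function.update_self (⟨i, hik⟩ : Fin k) X N

lemma chainProd_update {i : ℕ} (hik : i < k) (X) {a b : ℕ} (hai : a ≤ i) (hib : i < b) :
    chainProd d (_root_.ext d k (Function.update N ⟨i, hik⟩ X)) a b =
      chainProd d (_root_.ext d k N) (i + 1) b * (X * chainProd d (_root_.ext d k N) a i) := by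
  rw [chainProd_decomp hai hib]
  rw [chainProd_congr (M' := _root_.ext d k N)
      (fun l h1 h2 => ext_update_ne hik X (by omega)),
    ext_update_self,
    chainProd_congr (M' := _root_.ext d k N)
      (fun l h1 h2 => ext_update_ne hik X (by omega))]

end ext

lemma trace_transpose_mul_self_zero {m n : ℕ} (X : Matrix (Fin m) (Fin n) ℝ)
    (h : (Xᵀ * X).trace = 0) : X = 0 := by
  have h' : ∑ j, ∑ i, X i j ^ 2 = 0 := by
    rw [← h]
    simp [Matrix.trace, Matrix.diag, Matrix.mul_apply, sq]
  ext i j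
  have hnn : ∀ j_1 ∈ Finset.univ, (0:ℝ) ≤ ∑ i, X i j_1 ^ 2 :=
    fun j _ => Finset.sum_nonneg fun i _ => sq_nonneg _
  have h2 := (Finset.sum_eq_zero_iff_of_nonneg hnn).1 h' j (Finset.mem_univ j)
  have h3 := (Finset.sum_eq_zero_iff_of_nonneg
    (fun i _ => sq_nonneg (X i j))).1 h2 i (Finset.mem_univ i)
  simpa using pow_eq_zero_iff (n := 2) (by norm_num) |>.1 h3

lemma eq_zero_of_trace_forall {m n : ℕ} (Y : Matrix (Fin m) (Fin n) ℝ)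
    (h : ∀ H : Matrix (Fin m) (Fin n) ℝ, (Yᵀ * H).trace = 0) : Y = 0 :=
  trace_transpose_mul_self_zero Y (h Y)

lemma exists_mulVec_zero {m n : ℕ} (C : Matrix (Fin m) (Fin n) ℝ) (h : C.rank < n) :
    ∃ w : Fin n → ℝ, w ≠ 0 ∧ C *ᵥ w = 0 := by
  have hrn := LinearMap.finrank_range_add_finrank_ker C.mulVecLin
  rw [Matrix.rank] at h
  have hne : LinearMap.ker C.mulVecLin ≠ ⊥ := by
    intro hbot
    rw [hbot] at hrn
    simp [Module.finrank_fin_fun] at hrn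
    omega
  obtain ⟨w, hw, hw0⟩ := Submodule.exists_mem_ne_zero_of_ne_bot hne
  exact ⟨w, hw0, hw⟩

lemma rank_lt_of_mulVec_zero {m n : ℕ} (C : Matrix (Fin m) (Fin n) ℝ)
    {w : Fin n → ℝ} (hw : w ≠ 0) (h : C *ᵥ w = 0) : C.rank < n := by
  have hrn := LinearMap.finrank_range_add_finrank_ker C.mulVecLin
  have hker : 0 < Module.finrank ℝ (LinearMap.ker C.mulVecLin) := by
    have : LinearMap.ker C.mulVecLin ≠ ⊥ := by
      intro hbot
      apply hw
      have : w ∈ LinearMap.ker C.mulVecLin := by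
        simpa [LinearMap.mem_ker] using h
      rw [hbot] at this
      simpa using this
    rw [Module.finrank_pos_iff]
    exact Submodule.nontrivial_iff_ne_bot.2 this
  rw [Matrix.rank]
  simp [Module.finrank_fin_fun] at hrn
  omega

/-- If a rectangular real matrix with at least as many rows as columns has a nonzero
right-kernel vector, it has a nonzero left-kernel vector. -/
lemma exists_left_kernel {m n : ℕ} (C : Matrix (Fin m) (Fin n) ℝ) (hnm : n ≤ m)
    {w : Fin n → ℝ} (hw : w ≠ 0) (h : C *ᵥ w = 0) :
    ∃ u : Fin m → ℝ, u ≠ 0 ∧ u ᵥ* C = 0 := by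
  have h1 : C.rank < n := rank_lt_of_mulVec_zero C hw h
  have h2 : Cᵀ.rank < m := by rw [Matrix.rank_transpose]; omega
  obtain ⟨u, hu0, hu⟩ := exists_mulVec_zero Cᵀ h2
  exact ⟨u, hu0, by rwa [Matrix.mulVec_transpose] at hu⟩

lemma dirDeriv_zero {m n : ℕ} {f : Matrix (Fin m) (Fin n) ℝ → ℝ}
    (hdiff : Differentiable ℝ f) (P Q : Matrix (Fin m) (Fin n) ℝ)
    (hloc : IsLocalMin (fun t : ℝ => f (P + t • Q)) 0) : fderiv ℝ f P Q = 0 := by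
  have hφ : HasDerivAt (fun t : ℝ => P + t • Q) Q 0 := by
    have h := ((hasDerivAt_id (0:ℝ)).smul_const Q).const_add P
    rwa [one_smul] at h
  have hc : HasDerivAt (fun t : ℝ => f (P + t • Q)) (fderiv ℝ f P Q) 0 := by
    have := (hdiff (P + (0:ℝ) • Q)).hasFDerivAt.comp_hasDerivAt 0 hφ
    simpa using (by rw [zero_smul, add_zero] at this; exact this)
  have := hloc.deriv_eq_zero
  rwa [hc.deriv] at this

lemma isLocalMin_of_near {α : Type*} [MetricSpace α] {L : α → ℝ} {a : α}
    (h : IsLocalMin L a) :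
    ∃ ε > 0, ∀ b, dist b a < ε → L b = L a → IsLocalMin L b := by
  obtain ⟨ε, hε, hball⟩ := Metric.eventually_nhds_iff.1 h
  refine ⟨ε, hε, fun b hb hLb => ?_⟩
  rw [IsLocalMin, IsMinFilter, Metric.eventually_nhds_iff]
  refine ⟨ε - dist b a, by linarith, fun x hx => ?_⟩
  rw [hLb]
  exact hball (lt_of_le_of_lt (dist_triangle x b a) (by linarith))


lemma vecMulVec_mul {a b c : ℕ} (v : Fin a → ℝ) (u : Fin b → ℝ)
    (C : Matrix (Fin b) (Fin c) ℝ) :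
    Matrix.vecMulVec v u * C = Matrix.vecMulVec v (u ᵥ* C) := by
  ext i j
  simp only [Matrix.mul_apply, Matrix.vecMulVec_apply, Matrix.vecMul, dotProduct,
    Finset.mul_sum]
  exact Finset.sum_congr rfl fun x _ => by ring

lemma mul_vecMulVec {a b c : ℕ} (C : Matrix (Fin a) (Fin b) ℝ) (w : Fin b → ℝ)
    (v : Fin c → ℝ) :
    C * Matrix.vecMulVec w v = Matrix.vecMulVec (C *ᵥ w) v := by
  ext i j
  simp only [Matrix.mul_apply, Matrix.vecMulVec_apply, Matrix.mulVec, dotProduct,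
    Finset.sum_mul]
  exact Finset.sum_congr rfl fun x _ => by ring

lemma vecMulVec_zero_right {a b : ℕ} (v : Fin a → ℝ) :
    Matrix.vecMulVec v (0 : Fin b → ℝ) = 0 := by
  ext i j; simp [Matrix.vecMulVec_apply]

lemma vecMulVec_zero_left {a b : ℕ} (v : Fin b → ℝ) :
    Matrix.vecMulVec (0 : Fin a → ℝ) v = 0 := by
  ext i j; simp [Matrix.vecMulVec_apply]

lemma eq_zero_of_right_inj {a m n : ℕ} (C : Matrix (Fin m) (Fin n) ℝ)
    (hC : ∀ w : Fin n → ℝ, C *ᵥ w = 0 → w = 0)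
    (X : Matrix (Fin a) (Fin n) ℝ) (h : X * Cᵀ = 0) : X = 0 := by
  ext i j
  have hrow : C *ᵥ (X i) = 0 := by
    funext b
    have := congrFun (congrFun h i) b
    simp only [Matrix.mul_apply, Matrix.transpose_apply, Matrix.zero_apply] at this
    simp only [Matrix.mulVec, dotProduct, Pi.zero_apply]
    rw [← this]
    exact Finset.sum_congr rfl fun x _ => mul_comm _ _
  have := congrFun (hC (X i) hrow) j
  simpa using this

lemma eq_zero_of_left_inj {a m n : ℕ} (C : Matrix (Fin m) (Fin n) ℝ)
    (hC : ∀ u : Fin m → ℝ, u ᵥ* C = 0 → u = 0)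
    (X : Matrix (Fin m) (Fin a) ℝ) (h : Cᵀ * X = 0) : X = 0 := by
  ext i j
  have hcol : (fun c => X c j) ᵥ* C = 0 := by
    funext b
    have := congrFun (congrFun h b) j
    simp only [Matrix.mul_apply, Matrix.transpose_apply, Matrix.zero_apply] at this
    simp only [Matrix.vecMul, dotProduct, Pi.zero_apply]
    rw [← this]
    exact Finset.sum_congr rfl fun x _ => mul_comm _ _
  have := congrFun (hC _ hcol) i
  simpa using this

lemma eq_zero_of_single_left {m q n : ℕ} (u : Fin m → ℝ) (hu : u ≠ 0)
    (X : Matrix (Fin q) (Fin n) ℝ)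
    (h : ∀ x0 : Fin q, (Matrix.vecMulVec (Pi.single x0 (1:ℝ)) u)ᵀ * X = 0) : X = 0 := by
  obtain ⟨a0, ha0⟩ := Function.ne_iff.1 hu
  ext x0 b
  have := congrFun (congrFun (h x0) a0) b
  simp only [Matrix.mul_apply, Matrix.transpose_apply, Matrix.vecMulVec_apply,
    Matrix.zero_apply, Pi.single_apply] at this
  rw [Finset.sum_eq_single x0] at this
  · simp only [if_pos rfl, one_mul] at this
    simpa [Matrix.zero_apply] using (mul_eq_zero.1 this).resolve_left (by simpa using ha0)
  · intro x _ hx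
    simp [hx]
  · intro hx
    exact absurd (Finset.mem_univ x0) hx

lemma eq_zero_of_single_right {m q n : ℕ} (w : Fin m → ℝ) (hw : w ≠ 0)
    (X : Matrix (Fin n) (Fin q) ℝ)
    (h : ∀ x0 : Fin q, X * (Matrix.vecMulVec w (Pi.single x0 (1:ℝ)))ᵀ = 0) : X = 0 := by
  obtain ⟨b0, hb0⟩ := Function.ne_iff.1 hw
  ext a x0
  have := congrFun (congrFun (h x0) a) b0
  simp only [Matrix.mul_apply, Matrix.transpose_apply, Matrix.vecMulVec_apply,
    Matrix.zero_apply, Pi.single_apply] at this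
  rw [Finset.sum_eq_single x0] at this
  · have h2 : X a x0 * w b0 = 0 := by simpa using this
    simpa [Matrix.zero_apply] using (mul_eq_zero.1 h2).resolve_right (by simpa using hb0)
  · intro x _ hx
    simp [hx]
  · intro hx
    exact absurd (Finset.mem_univ x0) hx

section main

variable {d : ℕ → ℕ} {k : ℕ}
  {f : Matrix (Fin (d k)) (Fin (d 0)) ℝ → ℝ}
  {f' : Matrix (Fin (d k)) (Fin (d 0)) ℝ → Matrix (Fin (d k)) (Fin (d 0)) ℝ}

/-- First-order condition at a local minimum of the deep linear network. -/
lemma foc (hdiff : Differentiable ℝ f)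
    (hf' : ∀ M H, fderiv ℝ f M H = ((f' M)ᵀ * H).trace)
    {N : ∀ i : Fin k, Matrix (Fin (d (i.1 + 1))) (Fin (d i.1)) ℝ}
    (hloc : IsLocalMin (fun N => f (chainProd d (_root_.ext d k N) 0 k)) N)
    {i : ℕ} (hik : i < k) :
    (chainProd d (_root_.ext d k N) (i + 1) k)ᵀ *
      f' (chainProd d (_root_.ext d k N) 0 k) *
      (chainProd d (_root_.ext d k N) 0 i)ᵀ = 0 := by
  set W := _root_.ext d k N with hW
  set Top := chainProd d W (i + 1) k with hTop
  set Bot := chainProd d W 0 i with hBot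
  set P := chainProd d W 0 k with hP
  have hdecomp : P = Top * (N ⟨i, hik⟩ * Bot) := by
    rw [hP, chainProd_decomp (Nat.zero_le _) hik, ← hTop, ← hBot, hW, ext_apply hik]
  have key : ∀ H : Matrix (Fin (d (i + 1))) (Fin (d i)) ℝ, ((f' P)ᵀ * (Top * (H * Bot))).trace = 0 := by
    intro H
    have hpath : ∀ t : ℝ,
        chainProd d (_root_.ext d k (Function.update N ⟨i, hik⟩ (N ⟨i, hik⟩ + t • H))) 0 k
          = P + t • (Top * (H * Bot)) := by
      intro t
      rw [chainProd_update hik _ (Nat.zero_le _) hik, ← hW, ← hTop, ← hBot, hdecomp,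
        Matrix.add_mul, Matrix.mul_add, Matrix.smul_mul, Matrix.mul_smul]
    have h0 : Function.update N ⟨i, hik⟩ (N ⟨i, hik⟩ + (0:ℝ) • H) = N := by simp
    have tend : Filter.Tendsto
        (fun t : ℝ => Function.update N ⟨i, hik⟩ (N ⟨i, hik⟩ + t • H))
        (nhds 0) (nhds N) := by
      have hcont : Continuous
          (fun t : ℝ => Function.update N ⟨i, hik⟩ (N ⟨i, hik⟩ + t • H)) :=
        continuous_const.update _ (continuous_const.add (continuous_id.smul continuous_const))
      have := hcont.tendsto 0
      simpa [h0] using this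
    have hcomp : IsLocalMin
        ((fun N => f (chainProd d (_root_.ext d k N) 0 k)) ∘
          (fun t : ℝ => Function.update N ⟨i, hik⟩ (N ⟨i, hik⟩ + t • H))) 0 := by
      apply IsMinFilter.comp_tendsto _ tend
      rw [h0]
      exact hloc
    have hloc2 : IsLocalMin (fun t : ℝ => f (P + t • (Top * (H * Bot)))) 0 := by
      have heq : ((fun N => f (chainProd d (_root_.ext d k N) 0 k)) ∘
          (fun t : ℝ => Function.update N ⟨i, hik⟩ (N ⟨i, hik⟩ + t • H)))
          = fun t : ℝ => f (P + t • (Top * (H * Bot))) :=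
        funext fun t => congrArg f (hpath t)
      rwa [heq] at hcomp
    have := dirDeriv_zero hdiff P (Top * (H * Bot)) hloc2
    rwa [hf'] at this
  apply eq_zero_of_trace_forall
  intro H
  have := key H
  rw [← Matrix.mul_assoc, ← Matrix.mul_assoc, Matrix.trace_mul_cycle] at this
  rw [show (Topᵀ * f' P * Botᵀ)ᵀ = Bot * ((f' P)ᵀ * Top) by
    simp [Matrix.transpose_mul, Matrix.mul_assoc], Matrix.mul_assoc]
  rwa [Matrix.mul_assoc] at this

lemma half1 (hdiff : Differentiable ℝ f)
    (hf' : ∀ M H, fderiv ℝ f M H = ((f' M)ᵀ * H).trace)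
    {j : ℕ} (hjk : j < k) (hmin : ∀ i ≤ k, d j ≤ d i) :
    ∀ p, j + 1 ≤ p → p ≤ k →
      ∀ N : ∀ i : Fin k, Matrix (Fin (d (i.1 + 1))) (Fin (d i.1)) ℝ,
      IsLocalMin (fun N => f (chainProd d (_root_.ext d k N) 0 k)) N →
      (chainProd d (_root_.ext d k N) p k)ᵀ *
        f' (chainProd d (_root_.ext d k N) 0 k) *
        (chainProd d (_root_.ext d k N) 0 j)ᵀ = 0 := by
  intro p hp
  induction p, hp using Nat.le_induction with
  | base => exact fun _ N hloc => foc hdiff hf' hloc hjk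
  | succ p hp ih =>
    intro hp1k N hloc
    have hpk : p < k := hp1k
    have hpk' : p ≤ k := le_of_lt hpk
    have hjp : j ≤ p := le_trans (Nat.le_succ j) hp
    set W := _root_.ext d k N with hW
    set G := f' (chainProd d W 0 k) with hG
    set B := chainProd d W 0 j with hB
    set T := chainProd d W (p + 1) k with hT
    set C := chainProd d W j p with hC
    have hsplit0p : chainProd d W 0 p = C * B := chainProd_split (Nat.zero_le j) hjp
    have hih := ih hpk' N hloc
    -- hih : (chainProd d W p k)ᵀ * G * Bᵀ = 0
    have hSW : W p = N ⟨p, hpk⟩ := by rw [hW]; exact ext_apply hpk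
    have hsplitpk : chainProd d W p k = T * N ⟨p, hpk⟩ := by
      rw [chainProd_decomp (le_refl p) hpk, chainProd_self, Matrix.mul_one, hSW]
    by_cases hcase : ∀ w : Fin (d j) → ℝ, C *ᵥ w = 0 → w = 0
    · -- C has full column rank
      have hfoc := foc hdiff hf' hloc hpk
      rw [← hW, ← hT, ← hG, hsplit0p, Matrix.transpose_mul, ← Matrix.mul_assoc] at hfoc
      exact eq_zero_of_right_inj C hcase _ hfoc
    · push_neg at hcase
      obtain ⟨w, hcw, hw0⟩ := hcase
      obtain ⟨u, hu0, huC⟩ := exists_left_kernel C (hmin p hpk') hw0 hcw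
      obtain ⟨ε, hε, htrans⟩ := isLocalMin_of_near hloc
      apply eq_zero_of_single_left u hu0
      intro x0
      set E := Matrix.vecMulVec (Pi.single x0 (1:ℝ)) u with hE
      have hcont : Continuous
          (fun t : ℝ => Function.update N ⟨p, hpk⟩ (N ⟨p, hpk⟩ + t • E)) :=
        continuous_const.update _ (continuous_const.add (continuous_id.smul continuous_const))
      have h0up : Function.update N ⟨p, hpk⟩ (N ⟨p, hpk⟩ + (0:ℝ) • E) = N := by simp
      have tendc : Filter.Tendsto
          (fun t : ℝ => Function.update N ⟨p, hpk⟩ (N ⟨p, hpk⟩ + t • E))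
          (nhds 0) (nhds N) := by
        have := hcont.tendsto 0
        simpa [h0up] using this
      have hev := (Metric.tendsto_nhds.1 tendc) ε hε
      obtain ⟨r, hr, hball⟩ := Metric.eventually_nhds_iff.1 hev
      set δ := r / 2 with hδ
      have hδpos : 0 < δ := by positivity
      set N' := Function.update N ⟨p, hpk⟩ (N ⟨p, hpk⟩ + δ • E) with hN'
      have hdist : dist N' N < ε := by
        apply hball
        rw [Real.dist_eq, sub_zero, abs_of_pos hδpos]
        rw [hδ]; linarith
      have hEC : E * C = 0 := by rw [hE, vecMulVec_mul, huC, vecMulVec_zero_right]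
      have hECB : E * (C * B) = 0 := by rw [← Matrix.mul_assoc, hEC, Matrix.zero_mul]
      have hrhs : chainProd d W 0 k
          = chainProd d W (p + 1) k * (N ⟨p, hpk⟩ * chainProd d W 0 p) := by
        rw [chainProd_decomp (Nat.zero_le p) hpk, hSW]
      -- products unchanged
      have hprod : chainProd d (_root_.ext d k N') 0 k = chainProd d W 0 k := by
        rw [hN', chainProd_update hpk _ (Nat.zero_le _) hpk, ← hW,
          Matrix.add_mul, Matrix.smul_mul, hrhs, hsplit0p, hECB, smul_zero, add_zero]
      have hbot : chainProd d (_root_.ext d k N') 0 j = B := by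
        rw [hN', hB, hW]
        exact chainProd_congr fun l h1 h2 => ext_update_ne hpk _ (by omega)
      have htopp : chainProd d (_root_.ext d k N') p k = T * (N ⟨p, hpk⟩ + δ • E) := by
        rw [hN', chainProd_update hpk _ (le_refl p) hpk, ← hW, chainProd_self,
          Matrix.mul_one, ← hT]
      have hval : f (chainProd d (_root_.ext d k N') 0 k)
          = f (chainProd d (_root_.ext d k N) 0 k) := by
        rw [hprod]
      have hloc' := htrans N' hdist hval
      have hih' := ih hpk' N' hloc'
      rw [htopp, hprod, ← hG, hbot, Matrix.mul_add, Matrix.mul_smul,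
        Matrix.transpose_add, Matrix.transpose_smul, Matrix.add_mul, Matrix.add_mul,
        Matrix.smul_mul, Matrix.smul_mul, ← hsplitpk] at hih'
      rw [hih, zero_add] at hih'
      have hkey : ((T * E)ᵀ * G * Bᵀ) = 0 := by
        have := smul_eq_zero.1 hih'
        rcases this with h | h
        · exact absurd h (ne_of_gt hδpos)
        · exact h
      rw [Matrix.transpose_mul, Matrix.mul_assoc, Matrix.mul_assoc] at hkey
      rw [Matrix.mul_assoc]
      exact hkey

lemma half2 (hdiff : Differentiable ℝ f)
    (hf' : ∀ M H, fderiv ℝ f M H = ((f' M)ᵀ * H).trace)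
    {j : ℕ} (hj0 : 0 < j) (hjk : j < k) (hmin : ∀ i ≤ k, d j ≤ d i) :
    ∀ t s, s + t = j - 1 →
      ∀ N : ∀ i : Fin k, Matrix (Fin (d (i.1 + 1))) (Fin (d i.1)) ℝ,
      IsLocalMin (fun N => f (chainProd d (_root_.ext d k N) 0 k)) N →
      (chainProd d (_root_.ext d k N) j k)ᵀ *
        f' (chainProd d (_root_.ext d k N) 0 k) *
        (chainProd d (_root_.ext d k N) 0 s)ᵀ = 0 := by
  intro t
  induction t with
  | zero =>
    intro s hs N hloc
    have hj : j = s + 1 := by omega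
    subst hj
    exact foc hdiff hf' hloc (by omega)
  | succ t ih =>
    intro s hst N hloc
    have hsj : s + 1 < j := by omega
    have hsk : s < k := by omega
    set W := _root_.ext d k N with hW
    set G := f' (chainProd d W 0 k) with hG
    set A := chainProd d W j k with hA
    set C := chainProd d W (s + 1) j with hC
    set R := chainProd d W 0 s with hR
    have hSW : W s = N ⟨s, hsk⟩ := by rw [hW]; exact ext_apply hsk
    have h0s1 : chainProd d W 0 (s + 1) = N ⟨s, hsk⟩ * R := by
      rw [chainProd_succ_of_le (Nat.zero_le s), hSW, hR]
    have hsplitk : chainProd d W (s + 1) k = A * C :=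
      chainProd_split (le_of_lt hsj) (le_of_lt hjk)
    have hih := ih (s + 1) (by omega) N hloc
    -- hih : Aᵀ * G * (chainProd d W 0 (s+1))ᵀ = 0
    by_cases hcase : ∀ uu : Fin (d j) → ℝ, uu ᵥ* C = 0 → uu = 0
    · have hfoc := foc hdiff hf' hloc hsk
      rw [← hW, ← hG, ← hR, hsplitk] at hfoc
      apply eq_zero_of_left_inj C hcase
      simp only [Matrix.transpose_mul, Matrix.mul_assoc] at hfoc ⊢
      exact hfoc
    · push_neg at hcase
      obtain ⟨uu, huC, hu0⟩ := hcase
      have huCT : Cᵀ *ᵥ uu = 0 := by rwa [Matrix.mulVec_transpose]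
      obtain ⟨w, hw0, hwCT⟩ :=
        exists_left_kernel Cᵀ (hmin (s + 1) (by omega)) hu0 huCT
      have hCw : C *ᵥ w = 0 := by rwa [Matrix.vecMul_transpose] at hwCT
      obtain ⟨ε, hε, htrans⟩ := isLocalMin_of_near hloc
      apply eq_zero_of_single_right w hw0
      intro x0
      set E := Matrix.vecMulVec w (Pi.single x0 (1:ℝ)) with hE
      have hcont : Continuous
          (fun t : ℝ => Function.update N ⟨s, hsk⟩ (N ⟨s, hsk⟩ + t • E)) :=
        continuous_const.update _ (continuous_const.add (continuous_id.smul continuous_const))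
      have h0up : Function.update N ⟨s, hsk⟩ (N ⟨s, hsk⟩ + (0:ℝ) • E) = N := by simp
      have tendc : Filter.Tendsto
          (fun t : ℝ => Function.update N ⟨s, hsk⟩ (N ⟨s, hsk⟩ + t • E))
          (nhds 0) (nhds N) := by
        have := hcont.tendsto 0
        simpa [h0up] using this
      have hev := (Metric.tendsto_nhds.1 tendc) ε hε
      obtain ⟨r, hr, hball⟩ := Metric.eventually_nhds_iff.1 hev
      set δ := r / 2 with hδ
      have hδpos : 0 < δ := by positivity
      set N' := Function.update N ⟨s, hsk⟩ (N ⟨s, hsk⟩ + δ • E) with hN'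
      have hdist : dist N' N < ε := by
        apply hball
        rw [Real.dist_eq, sub_zero, abs_of_pos hδpos]
        rw [hδ]; linarith
      have hCE : C * E = 0 := by rw [hE, mul_vecMulVec, hCw, vecMulVec_zero_left]
      have hACE : chainProd d W (s + 1) k * E = 0 := by
        rw [hsplitk, Matrix.mul_assoc, hCE, Matrix.mul_zero]
      have hterm : chainProd d W (s + 1) k * (E * R) = 0 := by
        rw [← Matrix.mul_assoc, hACE, Matrix.zero_mul]
      have hrhs : chainProd d W 0 k
          = chainProd d W (s + 1) k * (N ⟨s, hsk⟩ * R) := by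
        rw [chainProd_decomp (Nat.zero_le s) hsk, hSW, hR]
      have hprod : chainProd d (_root_.ext d k N') 0 k = chainProd d W 0 k := by
        rw [hN', chainProd_update hsk _ (Nat.zero_le _) hsk, ← hW, ← hR,
          Matrix.add_mul, Matrix.smul_mul, Matrix.mul_add, Matrix.mul_smul, hterm,
          smul_zero, add_zero, hrhs]
      have htopj : chainProd d (_root_.ext d k N') j k = A := by
        rw [hN', hA, hW]
        exact chainProd_congr fun l h1 h2 => ext_update_ne hsk _ (by omega)
      have h0s1' : chainProd d (_root_.ext d k N') 0 (s + 1)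
          = (N ⟨s, hsk⟩ + δ • E) * R := by
        rw [hN', chainProd_update hsk _ (Nat.zero_le _) (Nat.lt_succ_self s), ← hW,
          chainProd_self, Matrix.one_mul, ← hR]
      have hval : f (chainProd d (_root_.ext d k N') 0 k)
          = f (chainProd d (_root_.ext d k N) 0 k) := by
        rw [hprod]
      have hloc' := htrans N' hdist hval
      have hih' := ih (s + 1) (by omega) N' hloc'
      rw [htopj, hprod, ← hG, h0s1', Matrix.add_mul, Matrix.smul_mul,
        Matrix.transpose_add, Matrix.transpose_smul, Matrix.mul_add,
        Matrix.mul_smul] at hih'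
      rw [h0s1] at hih
      rw [hih, zero_add] at hih'
      have hkey : Aᵀ * G * (E * R)ᵀ = 0 := by
        rcases smul_eq_zero.1 hih' with h | h
        · exact absurd h (ne_of_gt hδpos)
        · exact h
      rw [Matrix.transpose_mul, ← Matrix.mul_assoc] at hkey
      rw [Matrix.mul_assoc] at hkey
      rw [Matrix.mul_assoc]
      exact hkey

end main


open Matrix in
/-- at a local minimum of `L_k` with a strict interior bottleneck at
layer `j`, the gradient of `L₂(X, Y) = f (X Y)` vanishes at
`(A, B) = (M_k ⋯ M_{j+1}, M_j ⋯ M_1)`: `f'(AB) Bᵀ = 0` and `Aᵀ f'(AB) = 0`. -/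
theorem stmt_9 (d : ℕ → ℕ) (k : ℕ) (hk : 2 ≤ k)
    (f : Matrix (Fin (d k)) (Fin (d 0)) ℝ → ℝ)
    (hconv : ConvexOn ℝ Set.univ f) (hdiff : Differentiable ℝ f)
    (f' : Matrix (Fin (d k)) (Fin (d 0)) ℝ → Matrix (Fin (d k)) (Fin (d 0)) ℝ)
    (hf' : ∀ M H, fderiv ℝ f M H = ((f' M)ᵀ * H).trace)
    (j : ℕ) (hj0 : 0 < j) (hjk : j < k) (hmin : ∀ i ≤ k, d j ≤ d i)
    (M : ∀ i : Fin k, Matrix (Fin (d (i.1 + 1))) (Fin (d i.1)) ℝ)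
    (hloc : IsLocalMin (fun N => f (chainProd d (ext d k N) 0 k)) M) :
    f' (chainProd d (ext d k M) j k * chainProd d (ext d k M) 0 j) *
        (chainProd d (ext d k M) 0 j)ᵀ = 0 ∧
      (chainProd d (ext d k M) j k)ᵀ *
        f' (chainProd d (ext d k M) j k * chainProd d (ext d k M) 0 j) = 0 := by
  have hsplit : chainProd d (ext d k M) 0 k
      = chainProd d (ext d k M) j k * chainProd d (ext d k M) 0 j :=
    chainProd_split (Nat.zero_le j) (le_of_lt hjk)
  have h1 := half1 hdiff hf' hjk hmin k (by omega) (le_refl k) M hloc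
  rw [chainProd_self, Matrix.transpose_one, Matrix.one_mul, hsplit] at h1
  have h2 := half2 hdiff hf' hj0 hjk hmin (j - 1) 0 (by omega) M hloc
  rw [chainProd_self, Matrix.transpose_one, Matrix.mul_one, hsplit] at h2
  exact ⟨h1, h2⟩
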